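/- The list container example of the main theorems: for a fixed type X, the functor Y ↦ Unit ⊕ (X × Y) has an initial algebra with carrier equivalent to Σ n : ℕ, (Fin n → X) (i.e. List X), and a terminal coalgebra with carrier equivalent to Σ n : ℕ∞, (Cofin n → X), where Cofin n is the type of indices below n (finite for finite n, all of ℕ for n = ∞). -/

import Mathlib

/-- `Cofin n` : the type of indices below a conatural number `n`. -/
def Cofin (n : ℕ∞) : Type := {k : ℕ // (k : ℕ∞) < n}

open Stream'

namespace ListContainerAux

variable {X : Type}

/-- The destructor on `Seq X` valued in `Unit ⊕ X × Seq X`. -/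
def tau (s : Seq X) : Unit ⊕ X × Seq X :=
  match Seq.destruct s with
  | none => Sum.inl ()
  | some (a, s') => Sum.inr (a, s')

/-- convert a coalgebra structure to `Option` form. -/
def beta' {Y : Type} (β : Y → Unit ⊕ X × Y) (y : Y) : Option (X × Y) :=
  match β y with
  | Sum.inl _ => none
  | Sum.inr p => some p

theorem destruct_of_eq {Y : Type} {β : Y → Unit ⊕ X × Y} {f : Y → Seq X}
    (h : tau ∘ f = Sum.map id (Prod.map id f) ∘ β) (y : Y) :
    Seq.destruct (f y) = Option.map (Prod.map id f) (beta' β y) := by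
  have h1 : tau (f y) = Sum.map id (Prod.map id f) (β y) := congrFun h y
  unfold tau at h1
  cases hb : β y with
  | inl u =>
    rw [hb] at h1
    cases hd : Seq.destruct (f y) with
    | none => simp [beta', hb]; rfl
    | some p =>
      obtain ⟨a, s'⟩ := p
      rw [hd] at h1; simp [Sum.map] at h1
  | inr p =>
    rw [hb] at h1
    cases hd : Seq.destruct (f y) with
    | none => rw [hd] at h1; simp [Sum.map] at h1
    | some q =>
      obtain ⟨a, s'⟩ := q
      rw [hd] at h1
      simp only [Sum.map, Sum.elim_inr, Function.comp_apply, Sum.inr.injEq] at h1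
      simp [beta', hb, h1]; rfl

open Classical in
/-- the conatural length of a sequence. -/
noncomputable def elen (s : Seq X) : ℕ∞ :=
  if h : s.Terminates then (s.length h : ℕ∞) else ⊤

theorem lt_elen_iff {s : Seq X} {k : ℕ} :
    (k : ℕ∞) < elen s ↔ (s.get? k).isSome := by
  unfold elen
  split
  · rename_i h
    rw [Nat.cast_lt, Seq.lt_length_iff]
    constructor
    · rintro ⟨a, ha⟩
      rw [Option.mem_def] at ha
      simp [ha]
    · intro hs
      obtain ⟨a, ha⟩ := Option.isSome_iff_exists.mp hs
      exact ⟨a, Option.mem_def.mpr ha⟩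
  · rename_i h
    exact iff_of_true (WithTop.coe_lt_top k) (Stream'.Seq.not_terminates_iff.mp h k)

/-- build a sequence from a conatural-indexed tuple. -/
def mkSeq (n : ℕ∞) (f : Cofin n → X) : Seq X :=
  ⟨fun k => if h : (k : ℕ∞) < n then some (f ⟨k, h⟩) else none, by
    intro k hk
    simp only [Stream'.get] at hk ⊢
    split at hk
    · exact absurd hk (by simp)
    · rename_i h
      rw [dif_neg]
      intro h'
      exact h (lt_of_le_of_lt (by exact_mod_cast Nat.le_succ k) h')⟩

theorem get?_mkSeq (n : ℕ∞) (f : Cofin n → X) (k : ℕ) :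
    (mkSeq n f).get? k = if h : (k : ℕ∞) < n then some (f ⟨k, h⟩) else none := rfl

theorem enat_eq_of_lt_iff {a b : ℕ∞} (h : ∀ k : ℕ, (k : ℕ∞) < a ↔ (k : ℕ∞) < b) :
    a = b := by
  have aux : ∀ a b : ℕ∞, (∀ k : ℕ, (k : ℕ∞) < a ↔ (k : ℕ∞) < b) → a ≤ b := by
    intro a b h
    by_contra hc
    push_neg at hc
    lift b to ℕ using hc.ne_top
    exact lt_irrefl _ ((h b).mp hc)
  exact le_antisymm (aux a b h) (aux b a fun k => (h k).symm)

theorem elen_mkSeq (n : ℕ∞) (f : Cofin n → X) : elen (mkSeq n f) = n := by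
  apply enat_eq_of_lt_iff
  intro k
  rw [lt_elen_iff, get?_mkSeq]
  split <;> simp_all

theorem sigma_eq {n m : ℕ∞} (h : n = m) (g : Cofin n → X) (f : Cofin m → X)
    (hf : ∀ (k : ℕ) (hk : (k : ℕ∞) < n), g ⟨k, hk⟩ = f ⟨k, h ▸ hk⟩) :
    (⟨n, g⟩ : Σ n : ℕ∞, Cofin n → X) = ⟨m, f⟩ := by
  subst h
  exact congrArg _ (funext fun k => hf k.1 k.2)

/-- the equivalence between sequences and `Σ n : ℕ∞, Cofin n → X`. -/
noncomputable def seqEquiv : Seq X ≃ Σ n : ℕ∞, Cofin n → X where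
  toFun s := ⟨elen s, fun k => (s.get? k.1).get (lt_elen_iff.mp k.2)⟩
  invFun p := mkSeq p.1 p.2
  left_inv s := by
    apply Seq.ext
    intro n
    rw [get?_mkSeq]
    split
    · simp
    · rename_i h
      rw [lt_elen_iff, Option.not_isSome_iff_eq_none] at h
      exact h.symm
  right_inv p := by
    obtain ⟨n, f⟩ := p
    apply sigma_eq (elen_mkSeq n f)
    intro k hk
    have hkn : (k : ℕ∞) < n := (elen_mkSeq n f) ▸ hk
    have : (mkSeq n f).get? k = some (f ⟨k, hkn⟩) := by rw [get?_mkSeq, dif_pos hkn]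
    simp [this]

end ListContainerAux

theorem list_container_fixed_points (X : Type) :
    (∃ (I : Type) (ι : (Unit ⊕ X × I) → I),
      (∀ (Y : Type) (α : (Unit ⊕ X × Y) → Y),
        ∃! f : I → Y, f ∘ ι = α ∘ Sum.map id (Prod.map id f)) ∧
      Nonempty (I ≃ Σ n : ℕ, Fin n → X)) ∧
    (∃ (T : Type) (τ : T → (Unit ⊕ X × T)),
      (∀ (Y : Type) (β : Y → (Unit ⊕ X × Y)),
        ∃! f : Y → T, τ ∘ f = Sum.map id (Prod.map id f) ∘ β) ∧
      Nonempty (T ≃ Σ n : ℕ∞, Cofin n → X)) := by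
  constructor
  · -- initial algebra : List X
    refine ⟨List X, fun s => match s with | Sum.inl _ => [] | Sum.inr (x, l) => x :: l, ?_, ⟨List.equivSigmaTuple⟩⟩
    intro Y α
    refine ⟨fun l => l.rec (α (Sum.inl ())) (fun x _ ih => α (Sum.inr (x, ih))), ?_, ?_⟩
    · funext s
      cases s with
      | inl u => rfl
      | inr p => rfl
    · intro g hg
      funext l
      induction l with
      | nil => exact congrFun hg (Sum.inl ())
      | cons x l ih =>
        have := congrFun hg (Sum.inr (x, l))
        simp only [Function.comp_apply, Sum.map_inr, Prod.map, id_eq] at this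
        rw [this, ih]
  · -- terminal coalgebra : Seq X
    refine ⟨Stream'.Seq X, ListContainerAux.tau, ?_, ⟨ListContainerAux.seqEquiv⟩⟩
    intro Y β
    refine ⟨Stream'.Seq.corec (ListContainerAux.beta' β), ?_, ?_⟩
    · funext y
      simp only [Function.comp_apply, ListContainerAux.tau, Stream'.Seq.corec_eq]
      cases hb : β y with
      | inl u => simp [ListContainerAux.beta', hb, Stream'.Seq.omap]
      | inr p => cases p; simp [ListContainerAux.beta', hb, Stream'.Seq.omap, Sum.map, Prod.map]
    · intro g hg
      funext y
      have corec_spec : ListContainerAux.tau ∘ Stream'.Seq.corec (ListContainerAux.beta' β)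
          = Sum.map id (Prod.map id (Stream'.Seq.corec (ListContainerAux.beta' β))) ∘ β := by
        funext y
        simp only [Function.comp_apply, ListContainerAux.tau, Stream'.Seq.corec_eq]
        cases hb : β y with
        | inl u => simp [ListContainerAux.beta', hb, Stream'.Seq.omap]
        | inr p => cases p; simp [ListContainerAux.beta', hb, Stream'.Seq.omap, Sum.map, Prod.map]
      apply Stream'.Seq.eq_of_bisim
        (fun s₁ s₂ => ∃ y, s₁ = g y ∧ s₂ = Stream'.Seq.corec (ListContainerAux.beta' β) y)
      · rintro s₁ s₂ ⟨y, rfl, rfl⟩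
        rw [ListContainerAux.destruct_of_eq hg, ListContainerAux.destruct_of_eq corec_spec]
        cases hb : ListContainerAux.beta' β y with
        | none => simp
        | some p =>
          cases p with
          | mk x y' => exact ⟨rfl, y', rfl, rfl⟩
      · exact ⟨y, rfl, rfl⟩
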